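/- (Wolfe index upper bound.) For each α < ω₁ write α = β + η where η < ω^{ζ+1} and β is the smallest ordinal admitting such a decomposition. Then ρ(ε, α) ≤ β + ω^ζ·l + η whenever 2^{-(l+1)} < ε ≤ 2^{-l}, l = 0,1,2,…, where ρ(ε,α) = sup{γ : P_γ(ε, L_α) ≠ ∅} for the spaces (K_α, L_α) built over ζ. -/

import Mathlib

open Ordinal

/-- The Wolfe-index upper bound (second Proposition of the paper): if
`ρ : ℝ → Ordinal → Ordinal` satisfies the recursions of Lemma 4 for the family
`(K_α, L_α)` built over `ζ` (`ρ(ε,1) = ω^ζ` for `0 < ε ≤ ½`, `ρ(ε,1) = 0` for `ε > ½`,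
`ρ(ε,β+1) ≤ max(ρ(2ε,β) + ρ(ε,1), ρ(ε,β) + 1)`, and continuity along increasing
sequences at limits), then for every countable `α ≥ 1` with minimal decomposition
`α = β + η`, `η < ω^{ζ+1}`, one has `ρ(ε, α) ≤ β + ω^ζ·l + η` whenever
`2^{-(l+1)} < ε ≤ 2^{-l}`. -/

private lemma uniq_div {b q1 r1 q2 r2 : Ordinal} (h1 : r1 < b) (h2 : r2 < b)
    (h : b * q1 + r1 = b * q2 + r2) : q1 = q2 ∧ r1 = r2 := by
  have key : ∀ x y u v : Ordinal, u < b → v < b → x < y → b * x + u ≠ b * y + v := by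
    intro x y u v hu hv hxy hne
    have hlt : b * x + u < b * y + v := by
      calc b * x + u < b * x + b := add_lt_add_right hu _
        _ = b * (x + 1) := by rw [mul_add, mul_one]
        _ ≤ b * y := mul_le_mul_right (Order.add_one_le_of_lt hxy) _
        _ ≤ b * y + v := le_self_add
    exact hlt.ne hne
  rcases lt_trichotomy q1 q2 with hq | rfl | hq
  · exact absurd h (key _ _ _ _ h1 h2 hq)
  · exact ⟨rfl, add_left_cancel_iff.1 h⟩
  · exact absurd h.symm (key _ _ _ _ h2 h1 hq)

private lemma exists_seq (α : Ordinal) (hc : α.card ≤ Cardinal.aleph0) (hl : Order.IsSuccLimit α) :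
    ∃ g : ℕ → Ordinal, StrictMono g ∧ (⨆ n, g n) = α ∧ ∀ n, 1 ≤ g n := by
  have hcof : α.cof.ord = ω := by
    have h1 : α.cof = Cardinal.aleph0 :=
      le_antisymm ((cof_le_card α).trans hc) (aleph0_le_cof.2 hl)
    rw [h1, Cardinal.ord_aleph0]
  obtain ⟨f, hf⟩ := exists_fundamental_sequence α
  have hn : ∀ n : ℕ, (n : Ordinal) < α.cof.ord := by
    intro n; rw [hcof]; exact nat_lt_omega0 n
  refine ⟨fun n => f (n + 1) (hn (n + 1)), ?_, ?_, ?_⟩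
  · intro m n h
    exact hf.2.1 _ _ (by exact_mod_cast Nat.succ_lt_succ h)
  · apply le_antisymm
    · exact ciSup_le fun n => (hf.lt _).le
    · refine le_of_forall_lt fun x hx => ?_
      rw [← hf.blsub_eq] at hx
      obtain ⟨b, hb, hxb⟩ := lt_blsub_iff.1 hx
      obtain ⟨n, rfl⟩ : ∃ n : ℕ, b = n := lt_omega0.1 (by rw [← hcof]; exact hb)
      have h1 : f n hb < f (n + 1) (hn (n + 1)) :=
        hf.2.1 _ _ (by exact_mod_cast Nat.lt_succ_self n)
      exact lt_of_le_of_lt hxb (h1.trans_le (le_ciSup (Ordinal.bddAbove_range _) n))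
  · intro n
    rw [Order.one_le_iff_pos]
    exact (zero_le : (0 : Ordinal) ≤ _).trans_lt
      (hf.2.1 (hn 0) (hn (n + 1)) (by exact_mod_cast Nat.succ_pos n))

private lemma pow_lt (ζ : Ordinal) (l : ℕ) : ω ^ ζ * (l : Ordinal) < ω ^ (ζ + 1) := by
  rw [add_one_eq_succ, opow_succ]
  exact (mul_lt_mul_iff_right₀ (opow_pos ζ omega0_pos)).2 (nat_lt_omega0 l)

private lemma ineq (ζ : Ordinal) (k : ℕ) {r₀ : Ordinal} (hr : r₀ < ω ^ (ζ + 1)) :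
    ω ^ ζ * (k : Ordinal) + r₀ + ω ^ ζ ≤ ω ^ ζ * ((k : ℕ) + 1 : ℕ) + (r₀ + 1) := by
  set p := (ω : Ordinal) ^ ζ with hp
  have hω : p ≠ 0 := opow_ne_zero _ omega0_ne_zero
  obtain ⟨m, hm⟩ : ∃ m : ℕ, r₀ / p = m := by
    refine lt_omega0.1 ((Ordinal.div_lt hω).2 ?_)
    rw [hp, ← opow_succ, ← add_one_eq_succ]
    exact hr
  have hdm := Ordinal.div_add_mod r₀ p
  rw [hm] at hdm
  set s := r₀ % p with hs'
  have hs : s < p := Ordinal.mod_lt _ hω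
  have habs : s + p = p := add_omega0_opow hs
  have h1 : p * (k : Ordinal) + r₀ + p = p * ((k + m + 1 : ℕ)) := by
    rw [← hdm, add_assoc, add_assoc, habs]
    push_cast
    rw [mul_add, mul_add, mul_one, add_assoc]
  have h2 : p * (((k + 1 : ℕ)) : Ordinal) + p * (m : Ordinal) = p * ((k + m + 1 : ℕ)) := by
    rw [← mul_add]
    congr 1
    push_cast
    norm_cast
    omega
  calc p * (k : Ordinal) + r₀ + p = p * ((k + m + 1 : ℕ)) := h1
    _ = p * (((k + 1 : ℕ)) : Ordinal) + p * (m : Ordinal) := h2.symm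
    _ ≤ p * (((k + 1 : ℕ)) : Ordinal) + (p * (m : Ordinal) + (s + 1)) := by
        rw [← add_assoc]; exact le_self_add
    _ = p * (((k + 1 : ℕ)) : Ordinal) + (r₀ + 1) := by
        conv_rhs => rw [← hdm]
        rw [add_assoc]

private lemma compare (ζ : Ordinal) (l : ℕ) {q r qn rn : Ordinal}
    (hr : r < ω ^ (ζ + 1)) (hrn : rn < ω ^ (ζ + 1))
    (hlt : ω ^ (ζ + 1) * qn + rn < ω ^ (ζ + 1) * q + r) :
    ω ^ (ζ + 1) * qn + ω ^ ζ * l + rn ≤ ω ^ (ζ + 1) * q + ω ^ ζ * l + r := by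
  have hq : qn ≤ q := by
    by_contra hq
    push_neg at hq
    have h3 : ω ^ (ζ + 1) * q + r < ω ^ (ζ + 1) * qn := by
      calc ω ^ (ζ + 1) * q + r < ω ^ (ζ + 1) * q + ω ^ (ζ + 1) := add_lt_add_right hr _
        _ = ω ^ (ζ + 1) * (q + 1) := by rw [mul_add, mul_one]
        _ ≤ ω ^ (ζ + 1) * qn := mul_le_mul_right (Order.add_one_le_of_lt hq) _
    exact absurd (h3.trans_le (le_self_add)) hlt.asymm
  rcases hq.lt_or_eq with hq | rfl
  · refine le_of_lt ?_
    calc ω ^ (ζ + 1) * qn + ω ^ ζ * l + rn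
        < ω ^ (ζ + 1) * qn + ω ^ (ζ + 1) := by
          rw [add_assoc]
          exact add_lt_add_right (principal_add_omega0_opow _ (pow_lt ζ l) hrn) _
      _ = ω ^ (ζ + 1) * (qn + 1) := by rw [mul_add, mul_one]
      _ ≤ ω ^ (ζ + 1) * q := mul_le_mul_right (Order.add_one_le_of_lt hq) _
      _ ≤ ω ^ (ζ + 1) * q + ω ^ ζ * l + r := by
          rw [add_assoc]; exact le_self_add
  · have hrnr : rn < r := by
      have := hlt
      rwa [add_lt_add_iff_left] at this
    rw [add_assoc, add_assoc]
    exact add_le_add_right (add_le_add_right hrnr.le _) _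

private theorem key (ζ : Ordinal)
    (ρ : ℝ → Ordinal → Ordinal)
    (hone : ∀ ε : ℝ, 0 < ε → ε ≤ 1 / 2 → ρ ε 1 = ω ^ ζ)
    (hone' : ∀ ε : ℝ, 1 / 2 < ε → ρ ε 1 = 0)
    (hsucc : ∀ (ε : ℝ), 0 < ε → ∀ β : Ordinal,
      ρ ε (β + 1) ≤ max (ρ (2 * ε) β + ρ ε 1) (ρ ε β + 1))
    (hlim : ∀ (ε : ℝ), 0 < ε → ∀ (β : Ordinal) (βs : ℕ → Ordinal),
      StrictMono βs → (⨆ n, βs n) = β → ρ ε β = ⨆ n, ρ ε (βs n)) :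
    ∀ α : Ordinal, α.card ≤ Cardinal.aleph0 → 1 ≤ α →
      ∀ q r : Ordinal, r < ω ^ (ζ + 1) → α = ω ^ (ζ + 1) * q + r →
      ∀ (l : ℕ) (ε : ℝ), ((1 : ℝ) / 2) ^ (l + 1) < ε → (l = 0 ∨ ε ≤ ((1 : ℝ) / 2) ^ l) →
      ρ ε α ≤ ω ^ (ζ + 1) * q + ω ^ ζ * l + r := by
  intro α
  induction α using Ordinal.induction with
  | h α IH =>
  intro hcard hα1 q r hr hdec l ε hε1 hε2
  have hεpos : 0 < ε := lt_trans (by positivity) hε1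
  have hωlim : Order.IsSuccLimit (ω ^ (ζ + 1) : Ordinal) :=
    isSuccLimit_opow_left isSuccLimit_omega0 (by rw [add_one_eq_succ]; exact (Order.succ_ne_bot ζ))
  have homega : (1 : Ordinal) < ω ^ (ζ + 1) := one_lt_of_isSuccLimit hωlim
  rcases Ordinal.zero_or_succ_or_isSuccLimit α with h0 | ⟨γ, hγ⟩ | hlima
  · exact absurd hα1 (by simp [h0])
  · -- successor case
    rw [← add_one_eq_succ, eq_comm] at hγ
    rcases eq_or_ne γ 0 with rfl | hγ0
    · -- α = 1
      rw [zero_add] at hγ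
      have hq0 : q = 0 := by
        by_contra hq0
        have h1 : ω ^ (ζ + 1) ≤ ω ^ (ζ + 1) * q :=
          Ordinal.le_mul_left _ (pos_iff_ne_zero.2 hq0)
        have h2 : ω ^ (ζ + 1) * q ≤ α := hdec ▸ le_self_add
        rw [hγ] at h2
        exact absurd (h1.trans h2) homega.not_ge
      have hr1 : r = 1 := by
        rw [hγ, hq0, mul_zero, zero_add] at hdec; exact hdec.symm
      subst hq0 hr1
      rw [hγ, mul_zero, zero_add]
      rcases Nat.eq_zero_or_pos l with rfl | hl
      · rw [hone' ε (by rw [pow_one] at hε1; linarith)]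
        exact zero_le
      · have hεle : ε ≤ 1 / 2 := by
          rcases hε2 with h | h
          · exact absurd h hl.ne'
          · calc ε ≤ ((1 : ℝ) / 2) ^ l := h
              _ ≤ ((1 : ℝ) / 2) ^ 1 :=
                  pow_le_pow_of_le_one (by norm_num) (by norm_num) hl
              _ = 1 / 2 := pow_one _
        rw [hone ε hεpos hεle]
        calc (ω : Ordinal) ^ ζ = ω ^ ζ * 1 := (mul_one _).symm
          _ ≤ ω ^ ζ * l := mul_le_mul_right (by exact_mod_cast Nat.one_le_cast.2 hl) _
          _ ≤ ω ^ ζ * l + 1 := le_self_add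
    · -- α = γ + 1, γ ≥ 1
      have hγα : γ < α := by rw [hγ, add_one_eq_succ]; exact Order.lt_succ γ
      have hγcard : γ.card ≤ Cardinal.aleph0 := (card_le_card hγα.le).trans hcard
      have hγ1 : 1 ≤ γ := Ordinal.one_le_iff_ne_zero.2 hγ0
      obtain ⟨r₀, hr₀succ⟩ : ∃ r₀, r = r₀ + 1 := by
        rcases Ordinal.zero_or_succ_or_isSuccLimit r with rfl | ⟨r₀, hr₀⟩ | hrl
        · exfalso
          rw [add_zero] at hdec
          rcases eq_or_ne q 0 with rfl | hq0
          · rw [mul_zero] at hdec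
            exact absurd hα1 (by simp [hdec])
          · have hαl : Order.IsSuccLimit α :=
              hdec ▸ isSuccLimit_mul_left hωlim (pos_iff_ne_zero.2 hq0)
            have h4 := hαl.succ_lt hγα
            rw [← add_one_eq_succ, ← hγ] at h4
            exact h4.false
        · exact ⟨r₀, by rw [← hr₀, add_one_eq_succ]⟩
        · exfalso
          have hαl : Order.IsSuccLimit α := hdec ▸ isSuccLimit_add _ hrl
          have h4 := hαl.succ_lt hγα
          rw [← add_one_eq_succ, ← hγ] at h4
          exact h4.false
      have hrr : r₀ + 1 < ω ^ (ζ + 1) := hr₀succ ▸ hr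
      have hr₀ : r₀ < ω ^ (ζ + 1) := le_self_add.trans_lt hrr
      have hγdec : γ = ω ^ (ζ + 1) * q + r₀ := by
        have h := hdec
        rw [hγ, hr₀succ, ← add_assoc, add_one_eq_succ, add_one_eq_succ] at h
        exact Order.succ_injective h
      have hb := hsucc ε hεpos γ
      rw [← hγ] at hb
      rcases Nat.eq_zero_or_pos l with rfl | hl
      · -- l = 0
        have hhalf : 1 / 2 < ε := by rw [pow_one] at hε1; linarith
        have i1 := IH γ hγα hγcard hγ1 q r₀ hr₀ hγdec 0 (2 * ε)
          (by rw [pow_one]; linarith) (Or.inl rfl)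
        have i2 := IH γ hγα hγcard hγ1 q r₀ hr₀ hγdec 0 ε hε1 (Or.inl rfl)
        rw [hone' ε hhalf, add_zero] at hb
        rw [hr₀succ]
        refine hb.trans (max_le ?_ ?_)
        · exact i1.trans (add_le_add_right le_self_add _)
        · calc ρ ε γ + 1 ≤ ω ^ (ζ + 1) * q + ω ^ ζ * (0 : ℕ) + r₀ + 1 :=
              add_le_add_left i2 1
            _ = ω ^ (ζ + 1) * q + ω ^ ζ * (0 : ℕ) + (r₀ + 1) := add_assoc _ _ _
      · -- l ≥ 1
        obtain ⟨k, rfl⟩ : ∃ k, l = k + 1 := ⟨l - 1, by omega⟩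
        have hεle : ε ≤ ((1 : ℝ) / 2) ^ (k + 1) := hε2.resolve_left (by omega)
        have hhalf : ε ≤ 1 / 2 := by
          calc ε ≤ ((1 : ℝ) / 2) ^ (k + 1) := hεle
            _ ≤ ((1 : ℝ) / 2) ^ 1 :=
                pow_le_pow_of_le_one (by norm_num) (by norm_num) (by omega)
            _ = 1 / 2 := pow_one _
        have e1 : ((1 : ℝ) / 2) ^ (k + 1 + 1) = ((1 : ℝ) / 2) ^ (k + 1) * (1 / 2) :=
          pow_succ _ _
        have e2 : ((1 : ℝ) / 2) ^ (k + 1) = ((1 : ℝ) / 2) ^ k * (1 / 2) := pow_succ _ _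
        have i1 := IH γ hγα hγcard hγ1 q r₀ hr₀ hγdec k (2 * ε)
          (by rw [e2] at hεle ⊢; linarith [hε1, e1]) (Or.inr (by rw [e2] at hεle; linarith))
        have i2 := IH γ hγα hγcard hγ1 q r₀ hr₀ hγdec (k + 1) ε hε1 (Or.inr hεle)
        rw [hone ε hεpos hhalf] at hb
        rw [hr₀succ]
        refine hb.trans (max_le ?_ ?_)
        · calc ρ (2 * ε) γ + ω ^ ζ
              ≤ ω ^ (ζ + 1) * q + ω ^ ζ * (k : ℕ) + r₀ + ω ^ ζ := add_le_add_left i1 _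
            _ = ω ^ (ζ + 1) * q + (ω ^ ζ * (k : ℕ) + r₀ + ω ^ ζ) := by
                rw [add_assoc (ω ^ (ζ + 1) * q) (ω ^ ζ * (k : ℕ)) r₀,
                  add_assoc (ω ^ (ζ + 1) * q)]
            _ ≤ ω ^ (ζ + 1) * q + (ω ^ ζ * ((k + 1 : ℕ)) + (r₀ + 1)) :=
                add_le_add_right (ineq ζ k hr₀) _
            _ = ω ^ (ζ + 1) * q + ω ^ ζ * ((k + 1 : ℕ)) + (r₀ + 1) := (add_assoc _ _ _).symm
        · calc ρ ε γ + 1 ≤ ω ^ (ζ + 1) * q + ω ^ ζ * ((k + 1 : ℕ)) + r₀ + 1 :=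
              add_le_add_left i2 1
            _ = ω ^ (ζ + 1) * q + ω ^ ζ * ((k + 1 : ℕ)) + (r₀ + 1) := add_assoc _ _ _
  · -- limit case
    obtain ⟨g, hgmono, hgsup, hg1⟩ := exists_seq α hcard hlima
    have hglt : ∀ n, g n < α := fun n => by
      rw [← hgsup]
      exact lt_of_lt_of_le (hgmono (Nat.lt_succ_self n))
        (le_ciSup (Ordinal.bddAbove_range _) (n + 1))
    rw [hlim ε hεpos α g hgmono hgsup]
    refine ciSup_le fun n => ?_
    have hqn := Ordinal.div_add_mod (g n) (ω ^ (ζ + 1))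
    have hrn : g n % ω ^ (ζ + 1) < ω ^ (ζ + 1) :=
      Ordinal.mod_lt _ (opow_ne_zero _ omega0_ne_zero)
    have hb := IH (g n) (hglt n) ((card_le_card (hglt n).le).trans hcard) (hg1 n)
      _ _ hrn hqn.symm l ε hε1 hε2
    refine hb.trans (compare ζ l hr hrn ?_)
    rw [hqn, ← hdec]
    exact hglt n

theorem stmt19 (ζ : Ordinal) (hζ1 : 1 ≤ ζ) (hζ : ζ.card ≤ Cardinal.aleph0)
    (ρ : ℝ → Ordinal → Ordinal)
    (hone : ∀ ε : ℝ, 0 < ε → ε ≤ 1 / 2 → ρ ε 1 = ω ^ ζ)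
    (hone' : ∀ ε : ℝ, 1 / 2 < ε → ρ ε 1 = 0)
    (hsucc : ∀ (ε : ℝ), 0 < ε → ∀ β : Ordinal,
      ρ ε (β + 1) ≤ max (ρ (2 * ε) β + ρ ε 1) (ρ ε β + 1))
    (hlim : ∀ (ε : ℝ), 0 < ε → ∀ (β : Ordinal) (βs : ℕ → Ordinal),
      StrictMono βs → (⨆ n, βs n) = β → ρ ε β = ⨆ n, ρ ε (βs n)) :
    ∀ (α β η : Ordinal), α.card ≤ Cardinal.aleph0 → 1 ≤ α →
      η < ω ^ (ζ + 1) → α = β + η →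
      (∀ β' η' : Ordinal, η' < ω ^ (ζ + 1) → α = β' + η' → β ≤ β') →
      ∀ (l : ℕ) (ε : ℝ), ((1 : ℝ) / 2) ^ (l + 1) < ε → ε ≤ ((1 : ℝ) / 2) ^ l →
        ρ ε α ≤ β + ω ^ ζ * l + η := by
  intro α β η hcard hα1 hη hdec hmin l ε hε1 hε2
  have hω0 : (ω : Ordinal) ^ (ζ + 1) ≠ 0 := opow_ne_zero _ omega0_ne_zero
  set q := α / ω ^ (ζ + 1) with hqdef
  set r := α % ω ^ (ζ + 1) with hrdef
  have hr : r < ω ^ (ζ + 1) := Ordinal.mod_lt _ hω0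
  have hdm : ω ^ (ζ + 1) * q + r = α := Ordinal.div_add_mod _ _
  have hβle : β ≤ ω ^ (ζ + 1) * q := hmin _ r hr hdm.symm
  have hβdm : ω ^ (ζ + 1) * (β / ω ^ (ζ + 1)) + β % ω ^ (ζ + 1) = β :=
    Ordinal.div_add_mod _ _
  have hr' : β % ω ^ (ζ + 1) < ω ^ (ζ + 1) := Ordinal.mod_lt _ hω0
  have hsum : ω ^ (ζ + 1) * (β / ω ^ (ζ + 1)) + (β % ω ^ (ζ + 1) + η)
      = ω ^ (ζ + 1) * q + r := by
    rw [← add_assoc, hβdm, ← hdec, ← hdm]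
  obtain ⟨hq, hrsum⟩ := uniq_div (principal_add_omega0_opow _ hr' hη) hr hsum
  have hβeq : β = ω ^ (ζ + 1) * q := by
    refine le_antisymm hβle ?_
    calc ω ^ (ζ + 1) * q = ω ^ (ζ + 1) * (β / ω ^ (ζ + 1)) := by rw [hq]
      _ ≤ β := le_trans (le_self_add) hβdm.le
  have hr'0 : β % ω ^ (ζ + 1) = 0 := by
    have h5 : ω ^ (ζ + 1) * (β / ω ^ (ζ + 1)) + β % ω ^ (ζ + 1)
        = ω ^ (ζ + 1) * (β / ω ^ (ζ + 1)) + 0 := by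
      rw [add_zero, hβdm, hq]
      exact hβeq
    exact add_left_cancel_iff.1 h5
  have hrsum' : β % ω ^ (ζ + 1) + η = r := hrsum
  have hηr : η = r := by rw [← hrsum', hr'0, zero_add]
  rw [hβeq, hηr]
  exact key ζ ρ hone hone' hsucc hlim α hcard hα1 q r hr hdm.symm l ε hε1 (Or.inr hε2)
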